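/- arXiv:math/0102014 — 2 statements merged into one kernel-verified Lean document; each statement's English description precedes it below -/
import Mathlib

section
/- Let D be a derivation of g₁ ×̲ g₂ with components D_{ij} = pᵢ ∘ D ∘ pⱼ, where g₁, g₂ are S-algebras. For j ∈ {1,2}, i ≠ j, j ≠ k, and any m ≥ 1, one has D_{ij} ∘ D_{jj}^m ∘ D_{jk} = 0. -/
open Module

noncomputable section

/-- Direct sum (product) of two Lie rings. -/
instance prodLieRing (L L' : Type*) [LieRing L] [LieRing L'] : LieRing (L × L') where
  bracket p q := (⁅p.1, q.1⁆, ⁅p.2, q.2⁆)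
  add_lie x y z := Prod.ext (add_lie x.1 y.1 z.1) (add_lie x.2 y.2 z.2)
  lie_add x y z := Prod.ext (lie_add x.1 y.1 z.1) (lie_add x.2 y.2 z.2)
  lie_self x := Prod.ext (lie_self x.1) (lie_self x.2)
  leibniz_lie x y z := Prod.ext (leibniz_lie x.1 y.1 z.1) (leibniz_lie x.2 y.2 z.2)

instance prodLieAlgebra (R L L' : Type*) [CommRing R] [LieRing L] [LieRing L']
    [LieAlgebra R L] [LieAlgebra R L'] : LieAlgebra R (L × L') where
  lie_smul t x y := Prod.ext (lie_smul t x.1 y.1) (lie_smul t x.2 y.2)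

/-- A Lie algebra is nonsplit if it is not the direct sum of two nonzero ideals. -/
def LieAlgebra.Nonsplit (R L : Type*) [CommRing R] [LieRing L] [LieAlgebra R L] : Prop :=
  ¬ ∃ I J : LieIdeal R L, I ≠ ⊥ ∧ J ≠ ⊥ ∧ I ⊓ J = ⊥ ∧ I ⊔ J = ⊤

/-- `g` is nonabelian: some bracket is nonzero. -/
def LieAlgebra.Nonabelian (L : Type*) [LieRing L] : Prop := ∃ x y : L, ⁅x, y⁆ ≠ 0

/-- `L` is the product by generators `g1 ×̲ g2`: the central extension of `g1 ⊕ g2`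
by `ℂ^(n1 n2)` given by the cocycle pairing the generators of `g1` with those of `g2`. -/
structure IsProductByGenerators
    (L g1 g2 : Type*) [LieRing L] [LieAlgebra ℂ L]
    [LieRing g1] [LieAlgebra ℂ g1] [LieRing g2] [LieAlgebra ℂ g2] where
  m1 : ℕ
  m2 : ℕ
  n1 : ℕ
  n2 : ℕ
  two_le_n1 : 2 ≤ n1
  two_le_n2 : 2 ≤ n2
  n1_le : n1 ≤ m1
  n2_le : n2 ≤ m2
  /-- an adapted basis of `g1` -/
  b1 : Basis (Fin m1) ℂ g1
  /-- an adapted basis of `g2` -/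
  b2 : Basis (Fin m2) ℂ g2
  /-- the first `n1` basis vectors generate `g1` -/
  gen1 : Submodule.span ℂ (⇑b1 '' {i : Fin m1 | (i : ℕ) < n1}) ⊔
      (LieAlgebra.derivedSeries ℂ g1 1).toSubmodule = ⊤
  gen2 : Submodule.span ℂ (⇑b2 '' {i : Fin m2 | (i : ℕ) < n2}) ⊔
      (LieAlgebra.derivedSeries ℂ g2 1).toSubmodule = ⊤
  /-- the remaining basis vectors span the derived subalgebra -/
  adapted1 : (LieAlgebra.derivedSeries ℂ g1 1).toSubmodule ≤
      Submodule.span ℂ (⇑b1 '' {i : Fin m1 | n1 ≤ (i : ℕ)})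
  adapted2 : (LieAlgebra.derivedSeries ℂ g2 1).toSubmodule ≤
      Submodule.span ℂ (⇑b2 '' {i : Fin m2 | n2 ≤ (i : ℕ)})
  /-- the cocycle, as a bilinear map `g1 × g2 → ℂ^(n1 n2)` -/
  Φ : g1 →ₗ[ℂ] g2 →ₗ[ℂ] (Fin n1 → Fin n2 → ℂ)
  hΦ : ∀ i j, Φ (b1 i) (b2 j) =
      if h : (i : ℕ) < n1 ∧ (j : ℕ) < n2 then
        Pi.single (⟨i, h.1⟩ : Fin n1) (Pi.single (⟨j, h.2⟩ : Fin n2) (1 : ℂ)) else 0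
  /-- the underlying linear identification of `L` with `g1 ⊕ g2 ⊕ ℂ^(n1 n2)` -/
  e : (g1 × g2 × (Fin n1 → Fin n2 → ℂ)) ≃ₗ[ℂ] L
  bracket_eq : ∀ a a' : g1 × g2 × (Fin n1 → Fin n2 → ℂ),
      ⁅e a, e a'⁆ = e (⁅a.1, a'.1⁆, ⁅a.2.1, a'.2.1⁆, Φ a.1 a'.2.1 - Φ a'.1 a.2.1)

namespace IsProductByGenerators

variable {L g1 g2 : Type*} [LieRing L] [LieAlgebra ℂ L]
  [LieRing g1] [LieAlgebra ℂ g1] [LieRing g2] [LieAlgebra ℂ g2]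
  (P : IsProductByGenerators L g1 g2)

/-- inclusion of `g1` -/
def ι₁ (x : g1) : L := P.e (x, 0, 0)
/-- inclusion of `g2` -/
def ι₂ (y : g2) : L := P.e (0, y, 0)
/-- inclusion of the adjoined center `g3 = ℂ^(n1 n2)` -/
def ι₃ (v : Fin P.n1 → Fin P.n2 → ℂ) : L := P.e (0, 0, v)
/-- projection onto `g1` -/
def p₁ (z : L) : g1 := (P.e.symm z).1
/-- projection onto `g2` -/
def p₂ (z : L) : g2 := (P.e.symm z).2.1
/-- projection onto `g3` -/
def p₃ (z : L) : Fin P.n1 → Fin P.n2 → ℂ := (P.e.symm z).2.2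

/-- the component `Dᵢⱼ = pᵢ ∘ D ∘ ιⱼ` of an endomorphism of the product. -/
def D11 (D : L →ₗ[ℂ] L) (x : g1) : g1 := P.p₁ (D (P.ι₁ x))
def D21 (D : L →ₗ[ℂ] L) (x : g1) : g2 := P.p₂ (D (P.ι₁ x))
def D31 (D : L →ₗ[ℂ] L) (x : g1) : Fin P.n1 → Fin P.n2 → ℂ := P.p₃ (D (P.ι₁ x))
def D12 (D : L →ₗ[ℂ] L) (y : g2) : g1 := P.p₁ (D (P.ι₂ y))
def D22 (D : L →ₗ[ℂ] L) (y : g2) : g2 := P.p₂ (D (P.ι₂ y))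
def D32 (D : L →ₗ[ℂ] L) (y : g2) : Fin P.n1 → Fin P.n2 → ℂ := P.p₃ (D (P.ι₂ y))
def D13 (D : L →ₗ[ℂ] L) (v : Fin P.n1 → Fin P.n2 → ℂ) : g1 := P.p₁ (D (P.ι₃ v))
def D23 (D : L →ₗ[ℂ] L) (v : Fin P.n1 → Fin P.n2 → ℂ) : g2 := P.p₂ (D (P.ι₃ v))
def D33 (D : L →ₗ[ℂ] L) (v : Fin P.n1 → Fin P.n2 → ℂ) : Fin P.n1 → Fin P.n2 → ℂ :=
  P.p₃ (D (P.ι₃ v))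

end IsProductByGenerators

/-- `IsDerivation D`: `D` satisfies the Leibniz rule. -/
def IsDerivation {L : Type*} [LieRing L] [LieAlgebra ℂ L] (D : L →ₗ[ℂ] L) : Prop :=
  ∀ x y : L, D ⁅x, y⁆ = ⁅D x, y⁆ + ⁅x, D y⁆

/-- the descending sequence `g^{[k]}`, with `g^{[1]} = Der(g)(g)`,
`g^{[k+1]} = Der(g)(g^{[k]})`. -/
def derPow (g : Type*) [LieRing g] [LieAlgebra ℂ g] : ℕ → Submodule ℂ g
  | 0 => ⊤
  | k + 1 => Submodule.span ℂ
      {x | ∃ D : g →ₗ[ℂ] g, IsDerivation D ∧ ∃ y ∈ derPow g k, x = D y}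

/-- characteristically nilpotent: `g^{[m]} = 0` for some `m`. -/
def CharacteristicallyNilpotent (g : Type*) [LieRing g] [LieAlgebra ℂ g] : Prop :=
  ∃ m, 1 ≤ m ∧ derPow g m = ⊥

/-- An S-algebra: for any Lie algebra `g2` and any derivation `D` of `g1 ×̲ g2`,
the component `D₂₁ = p₂ ∘ D ∘ p₁` maps `g1` into `[g2, g2]`. -/
def IsSAlgebra (g1 : Type) [LieRing g1] [LieAlgebra ℂ g1] : Prop :=
  ∀ (g2 L : Type) (_ : LieRing g2) (_ : LieAlgebra ℂ g2) (_ : LieRing L)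
    (_ : LieAlgebra ℂ L) (P : IsProductByGenerators L g1 g2) (D : L →ₗ[ℂ] L),
    IsDerivation D → ∀ x : g1, P.D21 D x ∈ LieAlgebra.derivedSeries ℂ g2 1

/-- nilpotency index: smallest `k` with `C^k g = 0` (`C¹g = [g,g]`). -/
noncomputable def nilindex (g : Type*) [LieRing g] [LieAlgebra ℂ g] : ℕ :=
  sInf {k | LieModule.lowerCentralSeries ℂ g g k = ⊥}

/-- dimension as complex vector space -/
def fdim (g : Type*) [LieRing g] [LieAlgebra ℂ g] : ℕ := finrank ℂ g

/-- dimension of the center -/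
def zdim (g : Type*) [LieRing g] [LieAlgebra ℂ g] : ℕ :=
  finrank ℂ (LieAlgebra.center ℂ g).toSubmodule

/-- dimension of the derived subalgebra `C¹g = [g,g]` -/
def ddim (g : Type*) [LieRing g] [LieAlgebra ℂ g] : ℕ :=
  finrank ℂ (LieAlgebra.derivedSeries ℂ g 1).toSubmodule

/-- minimal number of generators of a nilpotent Lie algebra: `dim g/[g,g]` -/
def gdim (g : Type*) [LieRing g] [LieAlgebra ℂ g] : ℕ :=
  finrank ℂ (g ⧸ (LieAlgebra.derivedSeries ℂ g 1).toSubmodule)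

def FinDim (g : Type*) [LieRing g] [LieAlgebra ℂ g] : Prop := FiniteDimensional ℂ g

/-- existence of a Lie algebra isomorphism -/
def LieIso (L L' : Type*) [LieRing L] [LieAlgebra ℂ L] [LieRing L'] [LieAlgebra ℂ L'] : Prop :=
  Nonempty (L ≃ₗ⁅ℂ⁆ L')

/-- transpose of a matrix-of-functions as a linear equivalence -/
def TT (n1 n2 : ℕ) : (Fin n1 → Fin n2 → ℂ) ≃ₗ[ℂ] (Fin n2 → Fin n1 → ℂ) where
  toFun f := fun j i => f i j
  invFun f := fun i j => f j i
  map_add' _ _ := rfl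
  map_smul' _ _ := rfl
  left_inv _ := rfl
  right_inv _ := rfl

@[simp] lemma TT_apply {n1 n2 : ℕ} (f : Fin n1 → Fin n2 → ℂ) (j : Fin n2) (i : Fin n1) :
    TT n1 n2 f j i = f i j := rfl

lemma TT_TT {n1 n2 : ℕ} (v : Fin n1 → Fin n2 → ℂ) : TT n2 n1 (TT n1 n2 v) = v := rfl

lemma mem_ds {g : Type*} [LieRing g] [LieAlgebra ℂ g] (x : g) :
    x ∈ LieAlgebra.derivedSeries ℂ g 1 ↔
      x ∈ Submodule.span ℂ {m : g | ∃ a b : g, ⁅a, b⁆ = m} := by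
  have h1 : LieAlgebra.derivedSeries ℂ g 1 = ⁅(⊤ : LieIdeal ℂ g), (⊤ : LieIdeal ℂ g)⁆ := by
    rw [LieAlgebra.derivedSeries_def, LieAlgebra.derivedSeriesOfIdeal_succ,
      LieAlgebra.derivedSeriesOfIdeal_zero]
  rw [h1, ← LieSubmodule.mem_toSubmodule, LieSubmodule.lieIdeal_oper_eq_linear_span']
  congr! 3
  ext m
  constructor
  · rintro ⟨a, -, b, -, rfl⟩; exact ⟨a, b, rfl⟩
  · rintro ⟨a, b, rfl⟩; exact ⟨a, trivial, b, trivial, rfl⟩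

lemma bracket_mem_ds {g : Type*} [LieRing g] [LieAlgebra ℂ g] (a b : g) :
    ⁅a, b⁆ ∈ LieAlgebra.derivedSeries ℂ g 1 :=
  (mem_ds _).2 (Submodule.subset_span ⟨a, b, rfl⟩)

lemma span_singles {n1 n2 : ℕ} (v : Fin n1 → Fin n2 → ℂ) :
    v ∈ Submodule.span ℂ {w | ∃ i j, w = Pi.single i (Pi.single j (1 : ℂ))} := by
  have hv : v = ∑ i, ∑ j, v i j • (Pi.single i (Pi.single j (1 : ℂ)) : Fin n1 → Fin n2 → ℂ) := by
    funext a b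
    simp [Finset.sum_apply, Pi.single_apply, apply_ite, ite_apply, Finset.sum_ite_eq,
      Finset.sum_ite_eq']
  rw [hv]
  exact Submodule.sum_mem _ fun i _ => Submodule.sum_mem _ fun j _ =>
    Submodule.smul_mem _ _ (Submodule.subset_span ⟨i, j, rfl⟩)

namespace IsProductByGenerators

variable {L g1 g2 : Type*} [LieRing L] [LieAlgebra ℂ L]
  [LieRing g1] [LieAlgebra ℂ g1] [LieRing g2] [LieAlgebra ℂ g2]
  (P : IsProductByGenerators L g1 g2)

lemma p1_bracket (z w : L) : P.p₁ ⁅z, w⁆ = ⁅P.p₁ z, P.p₁ w⁆ := by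
  conv_lhs => rw [show z = P.e (P.e.symm z) from (P.e.apply_symm_apply z).symm,
    show w = P.e (P.e.symm w) from (P.e.apply_symm_apply w).symm, P.bracket_eq]
  simp [p₁]

lemma p2_bracket (z w : L) : P.p₂ ⁅z, w⁆ = ⁅P.p₂ z, P.p₂ w⁆ := by
  conv_lhs => rw [show z = P.e (P.e.symm z) from (P.e.apply_symm_apply z).symm,
    show w = P.e (P.e.symm w) from (P.e.apply_symm_apply w).symm, P.bracket_eq]
  simp [p₂]

lemma p3_bracket (z w : L) :
    P.p₃ ⁅z, w⁆ = P.Φ (P.p₁ z) (P.p₂ w) - P.Φ (P.p₁ w) (P.p₂ z) := by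
  conv_lhs => rw [show z = P.e (P.e.symm z) from (P.e.apply_symm_apply z).symm,
    show w = P.e (P.e.symm w) from (P.e.apply_symm_apply w).symm, P.bracket_eq]
  simp [p₃, p₁, p₂]

lemma p1_add (z w : L) : P.p₁ (z + w) = P.p₁ z + P.p₁ w := by simp [p₁]
lemma p2_add (z w : L) : P.p₂ (z + w) = P.p₂ z + P.p₂ w := by simp [p₂]
lemma p3_add (z w : L) : P.p₃ (z + w) = P.p₃ z + P.p₃ w := by simp [p₃]

@[simp] lemma p1_ι₁ (x : g1) : P.p₁ (P.ι₁ x) = x := by simp [p₁, ι₁]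
@[simp] lemma p2_ι₁ (x : g1) : P.p₂ (P.ι₁ x) = 0 := by simp [p₂, ι₁]
@[simp] lemma p1_ι₂ (y : g2) : P.p₁ (P.ι₂ y) = 0 := by simp [p₁, ι₂]
@[simp] lemma p2_ι₂ (y : g2) : P.p₂ (P.ι₂ y) = y := by simp [p₂, ι₂]

lemma ι₁_bracket (x x' : g1) : P.ι₁ ⁅x, x'⁆ = ⁅P.ι₁ x, P.ι₁ x'⁆ := by
  rw [ι₁, ι₁, ι₁, P.bracket_eq]
  simp

lemma Φ_eq_zero_right (x : g1) {y : g2} (hy : y ∈ LieAlgebra.derivedSeries ℂ g2 1) :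
    P.Φ x y = 0 := by
  have hb : ∀ j : Fin P.m2, P.n2 ≤ (j : ℕ) → P.Φ.flip (P.b2 j) = 0 := by
    intro j hj
    apply P.b1.ext
    intro i
    simp only [LinearMap.flip_apply, LinearMap.zero_apply]
    rw [P.hΦ, dif_neg (by omega)]
  have hspan : Submodule.span ℂ (⇑P.b2 '' {j : Fin P.m2 | P.n2 ≤ (j : ℕ)}) ≤
      LinearMap.ker (P.Φ x) := by
    rw [Submodule.span_le]
    rintro _ ⟨j, hj, rfl⟩
    have := hb j hj
    simp only [SetLike.mem_coe, LinearMap.mem_ker]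
    calc P.Φ x (P.b2 j) = P.Φ.flip (P.b2 j) x := rfl
    _ = 0 := by rw [this]; rfl
  exact hspan (P.adapted2 ((LieSubmodule.mem_toSubmodule _).2 hy))

/-- linear-map versions of the components -/
def j1L : g1 →ₗ[ℂ] L :=
  P.e.toLinearMap ∘ₗ LinearMap.inl ℂ g1 (g2 × (Fin P.n1 → Fin P.n2 → ℂ))
def j3L : (Fin P.n1 → Fin P.n2 → ℂ) →ₗ[ℂ] L :=
  P.e.toLinearMap ∘ₗ (LinearMap.inr ℂ g1 (g2 × (Fin P.n1 → Fin P.n2 → ℂ))) ∘ₗ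
    LinearMap.inr ℂ g2 (Fin P.n1 → Fin P.n2 → ℂ)
def q1L : L →ₗ[ℂ] g1 :=
  (LinearMap.fst ℂ g1 (g2 × (Fin P.n1 → Fin P.n2 → ℂ))) ∘ₗ P.e.symm.toLinearMap
def q2L : L →ₗ[ℂ] g2 :=
  (LinearMap.fst ℂ g2 (Fin P.n1 → Fin P.n2 → ℂ)) ∘ₗ
    (LinearMap.snd ℂ g1 (g2 × (Fin P.n1 → Fin P.n2 → ℂ))) ∘ₗ P.e.symm.toLinearMap
def q3L : L →ₗ[ℂ] (Fin P.n1 → Fin P.n2 → ℂ) :=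
  (LinearMap.snd ℂ g2 (Fin P.n1 → Fin P.n2 → ℂ)) ∘ₗ
    (LinearMap.snd ℂ g1 (g2 × (Fin P.n1 → Fin P.n2 → ℂ))) ∘ₗ P.e.symm.toLinearMap

variable (D : L →ₗ[ℂ] L)

def E11 : g1 →ₗ[ℂ] g1 := P.q1L ∘ₗ D ∘ₗ P.j1L
def E21 : g1 →ₗ[ℂ] g2 := P.q2L ∘ₗ D ∘ₗ P.j1L
def E31 : g1 →ₗ[ℂ] (Fin P.n1 → Fin P.n2 → ℂ) := P.q3L ∘ₗ D ∘ₗ P.j1L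
def E13 : (Fin P.n1 → Fin P.n2 → ℂ) →ₗ[ℂ] g1 := P.q1L ∘ₗ D ∘ₗ P.j3L

@[simp] lemma E11_apply (x : g1) : P.E11 D x = P.D11 D x := rfl
@[simp] lemma E21_apply (x : g1) : P.E21 D x = P.D21 D x := rfl
@[simp] lemma E31_apply (x : g1) : P.E31 D x = P.D31 D x := rfl
@[simp] lemma E13_apply (v : Fin P.n1 → Fin P.n2 → ℂ) : P.E13 D v = P.D13 D v := rfl

end IsProductByGenerators

namespace IsProductByGenerators

variable {L g1 g2 : Type*} [LieRing L] [LieAlgebra ℂ L]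
  [LieRing g1] [LieAlgebra ℂ g1] [LieRing g2] [LieAlgebra ℂ g2]
  (P : IsProductByGenerators L g1 g2) (D : L →ₗ[ℂ] L)

lemma D11_bracket (hD : IsDerivation D) (x x' : g1) :
    P.D11 D ⁅x, x'⁆ = ⁅P.D11 D x, x'⁆ + ⁅x, P.D11 D x'⁆ := by
  show P.p₁ (D (P.ι₁ ⁅x, x'⁆)) = _
  rw [P.ι₁_bracket, hD, P.p1_add, P.p1_bracket, P.p1_bracket, P.p1_ι₁, P.p1_ι₁]
  rfl

lemma D21_bracket (hD : IsDerivation D) (x x' : g1) : P.D21 D ⁅x, x'⁆ = 0 := by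
  show P.p₂ (D (P.ι₁ ⁅x, x'⁆)) = 0
  rw [P.ι₁_bracket, hD, P.p2_add, P.p2_bracket, P.p2_bracket, P.p2_ι₁, P.p2_ι₁]
  simp

lemma D31_bracket (hD : IsDerivation D)
    (h21 : ∀ x : g1, P.D21 D x ∈ LieAlgebra.derivedSeries ℂ g2 1) (x x' : g1) :
    P.D31 D ⁅x, x'⁆ = 0 := by
  show P.p₃ (D (P.ι₁ ⁅x, x'⁆)) = 0
  rw [P.ι₁_bracket, hD, P.p3_add, P.p3_bracket, P.p3_bracket, P.p1_ι₁, P.p2_ι₁,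
    P.p1_ι₁, P.p2_ι₁]
  have e1 : P.p₂ (D (P.ι₁ x)) ∈ LieAlgebra.derivedSeries ℂ g2 1 := h21 x
  have e2 : P.p₂ (D (P.ι₁ x')) ∈ LieAlgebra.derivedSeries ℂ g2 1 := h21 x'
  rw [P.Φ_eq_zero_right x' e1, P.Φ_eq_zero_right x e2]
  simp

lemma D21_eq_zero (hD : IsDerivation D) {x : g1}
    (hx : x ∈ LieAlgebra.derivedSeries ℂ g1 1) : P.D21 D x = 0 := by
  rw [mem_ds] at hx
  rw [show P.D21 D x = P.E21 D x from rfl]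
  induction hx using Submodule.span_induction with
  | mem a ha => obtain ⟨u, v, rfl⟩ := ha; exact P.D21_bracket D hD u v
  | zero => exact map_zero _
  | add a b _ _ ha hb => rw [map_add, ha, hb, add_zero]
  | smul c a _ ha => rw [map_smul, ha, smul_zero]

lemma D31_eq_zero (hD : IsDerivation D)
    (h21 : ∀ x : g1, P.D21 D x ∈ LieAlgebra.derivedSeries ℂ g2 1) {x : g1}
    (hx : x ∈ LieAlgebra.derivedSeries ℂ g1 1) : P.D31 D x = 0 := by
  rw [mem_ds] at hx
  rw [show P.D31 D x = P.E31 D x from rfl]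
  induction hx using Submodule.span_induction with
  | mem a ha => obtain ⟨u, v, rfl⟩ := ha; exact P.D31_bracket D hD h21 u v
  | zero => exact map_zero _
  | add a b _ _ ha hb => rw [map_add, ha, hb, add_zero]
  | smul c a _ ha => rw [map_smul, ha, smul_zero]

lemma D11_mem (hD : IsDerivation D) {x : g1}
    (hx : x ∈ LieAlgebra.derivedSeries ℂ g1 1) :
    P.D11 D x ∈ LieAlgebra.derivedSeries ℂ g1 1 := by
  rw [mem_ds] at hx
  rw [show P.D11 D x = P.E11 D x from rfl]
  induction hx using Submodule.span_induction with
  | mem a ha =>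
      obtain ⟨u, v, rfl⟩ := ha
      rw [show P.E11 D ⁅u, v⁆ = P.D11 D ⁅u, v⁆ from rfl, P.D11_bracket D hD]
      exact add_mem (bracket_mem_ds _ _) (bracket_mem_ds _ _)
  | zero => rw [map_zero]; exact zero_mem _
  | add a b _ _ ha hb => rw [map_add]; exact add_mem ha hb
  | smul c a _ ha => rw [map_smul]; exact Submodule.smul_mem _ _ ha

lemma D11_iterate_mem (hD : IsDerivation D) (m : ℕ) {x : g1}
    (hx : x ∈ LieAlgebra.derivedSeries ℂ g1 1) :
    (P.D11 D)^[m] x ∈ LieAlgebra.derivedSeries ℂ g1 1 := by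
  induction m with
  | zero => exact hx
  | succ k ih => rw [Function.iterate_succ_apply']; exact P.D11_mem D hD ih

lemma ι₃_single (i : Fin P.n1) (j : Fin P.n2) :
    P.ι₃ (Pi.single i (Pi.single j (1 : ℂ))) =
      ⁅P.ι₁ (P.b1 ⟨(i : ℕ), lt_of_lt_of_le i.2 P.n1_le⟩),
       P.ι₂ (P.b2 ⟨(j : ℕ), lt_of_lt_of_le j.2 P.n2_le⟩)⁆ := by
  have h3 : P.Φ (P.b1 ⟨(i : ℕ), lt_of_lt_of_le i.2 P.n1_le⟩)
      (P.b2 ⟨(j : ℕ), lt_of_lt_of_le j.2 P.n2_le⟩) = Pi.single i (Pi.single j (1 : ℂ)) := by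
    rw [P.hΦ, dif_pos ⟨i.2, j.2⟩]
  rw [ι₃, ι₁, ι₂, P.bracket_eq]
  congr 1
  simp [Prod.ext_iff, h3]

lemma D13_mem (hD : IsDerivation D) (v : Fin P.n1 → Fin P.n2 → ℂ) :
    P.D13 D v ∈ LieAlgebra.derivedSeries ℂ g1 1 := by
  have hv := span_singles v
  rw [show P.D13 D v = P.E13 D v from rfl]
  induction hv using Submodule.span_induction with
  | mem a ha =>
      obtain ⟨i, j, rfl⟩ := ha
      show P.p₁ (D (P.ι₃ (Pi.single i (Pi.single j 1)))) ∈ _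
      rw [P.ι₃_single, hD, P.p1_add, P.p1_bracket, P.p1_bracket]
      exact add_mem (bracket_mem_ds _ _) (bracket_mem_ds _ _)
  | zero => rw [map_zero]; exact zero_mem _
  | add a b _ _ ha hb => rw [map_add]; exact add_mem ha hb
  | smul c a _ ha => rw [map_smul]; exact Submodule.smul_mem _ _ ha

/-- the four `j = 1` identities, for a generic product. -/
lemma side (hD : IsDerivation D)
    (h21 : ∀ x : g1, P.D21 D x ∈ LieAlgebra.derivedSeries ℂ g2 1)
    (h12 : ∀ y : g2, P.D12 D y ∈ LieAlgebra.derivedSeries ℂ g1 1) (m : ℕ) :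
    (∀ y : g2, P.D21 D ((P.D11 D)^[m] (P.D12 D y)) = 0) ∧
    (∀ v : Fin P.n1 → Fin P.n2 → ℂ, P.D21 D ((P.D11 D)^[m] (P.D13 D v)) = 0) ∧
    (∀ y : g2, P.D31 D ((P.D11 D)^[m] (P.D12 D y)) = 0) ∧
    (∀ v : Fin P.n1 → Fin P.n2 → ℂ, P.D31 D ((P.D11 D)^[m] (P.D13 D v)) = 0) :=
  ⟨fun y => P.D21_eq_zero D hD (P.D11_iterate_mem D hD m (h12 y)),
   fun v => P.D21_eq_zero D hD (P.D11_iterate_mem D hD m (P.D13_mem D hD v)),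
   fun y => P.D31_eq_zero D hD h21 (P.D11_iterate_mem D hD m (h12 y)),
   fun v => P.D31_eq_zero D hD h21 (P.D11_iterate_mem D hD m (P.D13_mem D hD v))⟩

end IsProductByGenerators

namespace IsProductByGenerators

variable {L g1 g2 : Type*} [LieRing L] [LieAlgebra ℂ L]
  [LieRing g1] [LieAlgebra ℂ g1] [LieRing g2] [LieAlgebra ℂ g2]
  (P : IsProductByGenerators L g1 g2)

/-- the linear swap of the underlying decomposition -/
def swEquiv : (g2 × g1 × (Fin P.n2 → Fin P.n1 → ℂ)) ≃ₗ[ℂ]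
    (g1 × g2 × (Fin P.n1 → Fin P.n2 → ℂ)) where
  toFun a := (a.2.1, a.1, -(TT P.n2 P.n1) a.2.2)
  invFun b := (b.2.1, b.1, -(TT P.n1 P.n2) b.2.2)
  map_add' a b := by
    refine Prod.ext rfl (Prod.ext rfl ?_)
    show -(TT P.n2 P.n1) (a.2.2 + b.2.2) = _
    rw [map_add, neg_add]
    rfl
  map_smul' c a := by
    refine Prod.ext rfl (Prod.ext rfl ?_)
    show -(TT P.n2 P.n1) (c • a.2.2) = c • -(TT P.n2 P.n1) a.2.2
    rw [map_smul, smul_neg]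
  left_inv a := by
    refine Prod.ext rfl (Prod.ext rfl ?_)
    show -(TT P.n1 P.n2) (-(TT P.n2 P.n1) a.2.2) = a.2.2
    rw [map_neg, neg_neg]
    rfl
  right_inv b := by
    refine Prod.ext rfl (Prod.ext rfl ?_)
    show -(TT P.n2 P.n1) (-(TT P.n1 P.n2) b.2.2) = b.2.2
    rw [map_neg, neg_neg]
    rfl

/-- the swapped product structure `g2 ×̲ g1`. -/
def swap : IsProductByGenerators L g2 g1 where
  m1 := P.m2
  m2 := P.m1
  n1 := P.n2
  n2 := P.n1
  two_le_n1 := P.two_le_n2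
  two_le_n2 := P.two_le_n1
  n1_le := P.n2_le
  n2_le := P.n1_le
  b1 := P.b2
  b2 := P.b1
  gen1 := P.gen2
  gen2 := P.gen1
  adapted1 := P.adapted2
  adapted2 := P.adapted1
  Φ := (P.Φ.compr₂ (TT P.n1 P.n2).toLinearMap).flip
  hΦ := by
    intro j i
    show TT P.n1 P.n2 (P.Φ (P.b1 i) (P.b2 j)) = _
    rw [P.hΦ]
    by_cases h : (i : ℕ) < P.n1 ∧ (j : ℕ) < P.n2
    · rw [dif_pos h, dif_pos ⟨h.2, h.1⟩]
      funext j' i'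
      rw [TT_apply]
      by_cases h1 : i' = ⟨i, h.1⟩ <;> by_cases h2 : j' = ⟨j, h.2⟩ <;>
        simp [h1, h2, Pi.single_apply]
    · rw [dif_neg h, dif_neg (by tauto), map_zero]
  e := (P.swEquiv).trans P.e
  bracket_eq := by
    intro a a'
    show ⁅P.e (P.swEquiv a), P.e (P.swEquiv a')⁆ = P.e (P.swEquiv _)
    rw [P.bracket_eq]
    congr 1
    refine Prod.ext rfl (Prod.ext rfl ?_)
    show P.Φ a.2.1 a'.1 - P.Φ a'.2.1 a.1 =
      -(TT P.n2 P.n1) (TT P.n1 P.n2 (P.Φ a'.2.1 a.1) - TT P.n1 P.n2 (P.Φ a.2.1 a'.1))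
    rw [← map_sub, TT_TT, neg_sub]

variable (D : L →ₗ[ℂ] L)

lemma swap_ι₁ (y : g2) : P.swap.ι₁ y = P.ι₂ y := by
  show P.e (P.swEquiv (y, 0, 0)) = P.e (0, y, 0)
  congr 1
  refine Prod.ext rfl (Prod.ext rfl ?_)
  show -(TT P.n2 P.n1) 0 = 0
  rw [map_zero, neg_zero]

lemma swap_ι₃ (w : Fin P.n2 → Fin P.n1 → ℂ) :
    P.swap.ι₃ w = P.ι₃ (-(TT P.n2 P.n1) w) := rfl

lemma swap_p₁ (z : L) : P.swap.p₁ z = P.p₂ z := rfl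
lemma swap_p₂ (z : L) : P.swap.p₂ z = P.p₁ z := rfl
lemma swap_p₃ (z : L) : P.swap.p₃ z = -(TT P.n1 P.n2) (P.p₃ z) := rfl

lemma swap_D11 : P.swap.D11 D = P.D22 D := by
  funext y
  show P.swap.p₁ (D (P.swap.ι₁ y)) = _
  rw [P.swap_ι₁, P.swap_p₁]
  rfl

lemma swap_D21 : P.swap.D21 D = P.D12 D := by
  funext y
  show P.swap.p₂ (D (P.swap.ι₁ y)) = _
  rw [P.swap_ι₁, P.swap_p₂]
  rfl

lemma swap_ι₂ (x : g1) : P.swap.ι₂ x = P.ι₁ x := by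
  show P.e (P.swEquiv (0, x, 0)) = P.e (x, 0, 0)
  congr 1
  refine Prod.ext rfl (Prod.ext rfl ?_)
  show -(TT P.n2 P.n1) 0 = 0
  rw [map_zero, neg_zero]

lemma swap_D12 : P.swap.D12 D = P.D21 D := by
  funext x
  show P.swap.p₁ (D (P.swap.ι₂ x)) = _
  rw [P.swap_ι₂, P.swap_p₁]
  rfl

lemma swap_D31 (y : g2) : P.swap.D31 D y = -(TT P.n1 P.n2) (P.D32 D y) := by
  show P.swap.p₃ (D (P.swap.ι₁ y)) = _
  rw [P.swap_ι₁, P.swap_p₃]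
  rfl

lemma swap_D13 (w : Fin P.n2 → Fin P.n1 → ℂ) :
    P.swap.D13 D w = P.D23 D (-(TT P.n2 P.n1) w) := by
  show P.swap.p₁ (D (P.swap.ι₃ w)) = _
  rw [P.swap_ι₃, P.swap_p₁]
  rfl

end IsProductByGenerators

/-- for S-algebras `g1`, `g2` and a derivation `D` of `g1 ×̲ g2`,
`D_{ij} ∘ D_{jj}^m ∘ D_{jk} = 0` for `j ∈ {1,2}`, `i ≠ j`, `j ≠ k`, `m ≥ 1`. -/
theorem statement_12 (L g1 g2 : Type) [LieRing L] [LieAlgebra ℂ L]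
    [LieRing g1] [LieAlgebra ℂ g1] [LieRing g2] [LieAlgebra ℂ g2]
    [FiniteDimensional ℂ g1] [FiniteDimensional ℂ g2]
    [LieRing.IsNilpotent g1] [LieRing.IsNilpotent g2]
    (hS1 : IsSAlgebra g1) (hS2 : IsSAlgebra g2)
    (P : IsProductByGenerators L g1 g2)
    (D : L →ₗ[ℂ] L) (hD : IsDerivation D) :
    ∀ m : ℕ, 1 ≤ m →
      -- j = 1 (i, k ∈ {2,3})
      (∀ y : g2, P.D21 D ((P.D11 D)^[m] (P.D12 D y)) = 0) ∧
      (∀ v : Fin P.n1 → Fin P.n2 → ℂ, P.D21 D ((P.D11 D)^[m] (P.D13 D v)) = 0) ∧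
      (∀ y : g2, P.D31 D ((P.D11 D)^[m] (P.D12 D y)) = 0) ∧
      (∀ v : Fin P.n1 → Fin P.n2 → ℂ, P.D31 D ((P.D11 D)^[m] (P.D13 D v)) = 0) ∧
      -- j = 2 (i, k ∈ {1,3})
      (∀ x : g1, P.D12 D ((P.D22 D)^[m] (P.D21 D x)) = 0) ∧
      (∀ v : Fin P.n1 → Fin P.n2 → ℂ, P.D12 D ((P.D22 D)^[m] (P.D23 D v)) = 0) ∧
      (∀ x : g1, P.D32 D ((P.D22 D)^[m] (P.D21 D x)) = 0) ∧
      (∀ v : Fin P.n1 → Fin P.n2 → ℂ, P.D32 D ((P.D22 D)^[m] (P.D23 D v)) = 0) := by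
  intro m _
  have h21 : ∀ x : g1, P.D21 D x ∈ LieAlgebra.derivedSeries ℂ g2 1 :=
    hS1 g2 L _ _ _ _ P D hD
  have h21' : ∀ y : g2, P.swap.D21 D y ∈ LieAlgebra.derivedSeries ℂ g1 1 :=
    hS2 g1 L _ _ _ _ P.swap D hD
  have h12 : ∀ y : g2, P.D12 D y ∈ LieAlgebra.derivedSeries ℂ g1 1 := by
    intro y; have := h21' y; rwa [P.swap_D21] at this
  have h12' : ∀ x : g1, P.swap.D12 D x ∈ LieAlgebra.derivedSeries ℂ g2 1 := by
    intro x; rw [P.swap_D12]; exact h21 x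
  obtain ⟨A1, A2, A3, A4⟩ := P.side D hD h21 h12 m
  obtain ⟨B1, B2, B3, B4⟩ := P.swap.side D hD h21' h12' m
  refine ⟨A1, A2, A3, A4, ?_, ?_, ?_, ?_⟩
  · intro x
    have hB := B1 x
    rwa [P.swap_D21, P.swap_D11, P.swap_D12] at hB
  · intro v
    have hB := B2 (-(TT P.n1 P.n2) v)
    rw [P.swap_D21, P.swap_D11, P.swap_D13, show -(TT P.n2 P.n1) (-(TT P.n1 P.n2) v) = v
      from by rw [map_neg, neg_neg, TT_TT]] at hB
    exact hB
  · intro x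
    have hB := B3 x
    rw [P.swap_D31, P.swap_D11, P.swap_D12] at hB
    exact (LinearEquiv.map_eq_zero_iff _).mp (neg_eq_zero.mp hB)
  · intro v
    have hB := B4 (-(TT P.n1 P.n2) v)
    rw [P.swap_D31, P.swap_D11, P.swap_D13, show -(TT P.n2 P.n1) (-(TT P.n1 P.n2) v) = v
      from by rw [map_neg, neg_neg, TT_TT]] at hB
    exact (LinearEquiv.map_eq_zero_iff _).mp (neg_eq_zero.mp hB)
end
end

section
/- Let g be a characteristically nilpotent S-algebra with k generators. Then for any n ≥ 1, the n-th power ×̲ⁿg = g ×̲ ... ×̲ g (n times) satisfies dim(×̲ⁿg) = (1/2)n²k² + (dim g − (1/2)k²)n and dim Z(×̲ⁿg) = (1/2)n²k² + (dim Z(g) − (1/2)k²)n. -/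
open Module

noncomputable section

section AuxProofs

open LieAlgebra Submodule

def subProdEquiv {K M N : Type*} [DivisionRing K] [AddCommGroup M] [Module K M]
    [AddCommGroup N] [Module K N] (p : Submodule K M) (q : Submodule K N) :
    (p.prod q) ≃ₗ[K] p × q where
  toFun x := (⟨x.1.1, (Submodule.mem_prod.mp x.2).1⟩, ⟨x.1.2, (Submodule.mem_prod.mp x.2).2⟩)
  invFun x := ⟨(x.1.1, x.2.1), Submodule.mem_prod.mpr ⟨x.1.2, x.2.2⟩⟩
  map_add' _ _ := rfl
  map_smul' _ _ := rfl
  left_inv _ := rfl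
  right_inv _ := rfl

lemma finrank_prod_sub {K M N : Type*} [DivisionRing K] [AddCommGroup M] [Module K M]
    [AddCommGroup N] [Module K N] [FiniteDimensional K M] [FiniteDimensional K N]
    (p : Submodule K M) (q : Submodule K N) :
    finrank K (p.prod q) = finrank K p + finrank K q :=
  (subProdEquiv p q).finrank_eq.trans Module.finrank_prod

lemma derived_one_toSubmodule_eq (g : Type*) [LieRing g] [LieAlgebra ℂ g] :
    (LieAlgebra.derivedSeries ℂ g 1).toSubmodule =
      Submodule.span ℂ {m : g | ∃ a b : g, ⁅a, b⁆ = m} := by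
  have h1 : LieAlgebra.derivedSeries ℂ g 1 = ⁅(⊤ : LieIdeal ℂ g), (⊤ : LieIdeal ℂ g)⁆ := by
    rw [LieAlgebra.derivedSeries_def, LieAlgebra.derivedSeriesOfIdeal_succ,
      LieAlgebra.derivedSeriesOfIdeal_zero]
  rw [h1, LieSubmodule.lieIdeal_oper_eq_linear_span']
  congr 1
  ext m
  simp

lemma lie_mem_derived_one {g : Type*} [LieRing g] [LieAlgebra ℂ g] (a b : g) :
    ⁅a, b⁆ ∈ (LieAlgebra.derivedSeries ℂ g 1).toSubmodule := by
  rw [derived_one_toSubmodule_eq]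
  exact Submodule.subset_span ⟨a, b, rfl⟩

/-- The center of a characteristically nilpotent Lie algebra is contained in its
derived subalgebra. -/
lemma center_le_derived_of_cn (g : Type*) [LieRing g] [LieAlgebra ℂ g]
    (hcn : CharacteristicallyNilpotent g) :
    (LieAlgebra.center ℂ g).toSubmodule ≤ (LieAlgebra.derivedSeries ℂ g 1).toSubmodule := by
  intro z hz
  rw [LieSubmodule.mem_toSubmodule, LieModule.mem_maxTrivSubmodule] at hz
  by_contra hznot
  obtain ⟨f, hf1, hf2⟩ := Submodule.exists_dual_map_eq_bot_of_notMem hznot inferInstance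
  have hfd : ∀ w ∈ (LieAlgebra.derivedSeries ℂ g 1).toSubmodule, f w = 0 := by
    intro w hw
    have : f w ∈ Submodule.map f (LieAlgebra.derivedSeries ℂ g 1).toSubmodule :=
      Submodule.mem_map_of_mem hw
    rw [hf2] at this
    simpa using this
  set D : g →ₗ[ℂ] g := LinearMap.smulRight ((f z)⁻¹ • f) z with hD
  have hDz : D z = z := by
    simp only [hD, LinearMap.smulRight_apply, LinearMap.smul_apply, smul_eq_mul]
    rw [inv_mul_cancel₀ hf1, one_smul]
  have hDder : IsDerivation D := by
    intro x y
    have h0 : D ⁅x, y⁆ = 0 := by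
      simp only [hD, LinearMap.smulRight_apply, LinearMap.smul_apply, smul_eq_mul]
      rw [hfd _ (lie_mem_derived_one x y), mul_zero, zero_smul]
    rw [h0]
    have hzc : ∀ w : g, ⁅z, w⁆ = 0 := by
      intro w
      rw [← lie_skew, hz w, neg_zero]
    simp only [hD, LinearMap.smulRight_apply, smul_lie, lie_smul, hzc, hz, smul_zero,
      add_zero]
  have hmem : ∀ m : ℕ, z ∈ derPow g m := by
    intro m
    induction m with
    | zero => exact Submodule.mem_top
    | succ m ih =>
      exact Submodule.subset_span ⟨D, hDder, z, ih, hDz.symm⟩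
  obtain ⟨m, -, hm⟩ := hcn
  have : z = 0 := by simpa [hm] using hmem m
  exact hf1 (by simp [this])

namespace IsProductByGenerators

variable {L g1 g2 : Type*} [LieRing L] [LieAlgebra ℂ L]
  [LieRing g1] [LieAlgebra ℂ g1] [LieRing g2] [LieAlgebra ℂ g2]
  (P : IsProductByGenerators L g1 g2)

lemma Phi_left_tail (i : Fin P.m1) (hi : P.n1 ≤ (i : ℕ)) : P.Φ (P.b1 i) = 0 := by
  apply P.b2.ext
  intro j
  rw [P.hΦ i j, dif_neg]
  · rfl
  · rintro ⟨h1, -⟩; omega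

lemma Phi_right_tail (x : g1) (j : Fin P.m2) (hj : P.n2 ≤ (j : ℕ)) :
    P.Φ x (P.b2 j) = 0 := by
  have : P.Φ.flip (P.b2 j) = 0 := by
    apply P.b1.ext
    intro i
    show P.Φ (P.b1 i) (P.b2 j) = 0
    rw [P.hΦ i j, dif_neg]
    rintro ⟨-, h2⟩; omega
  have h2 := congrArg (fun F => F x) this
  simpa using h2

lemma Phi_left_zero {x : g1}
    (hx : x ∈ Submodule.span ℂ (⇑P.b1 '' {i : Fin P.m1 | P.n1 ≤ (i : ℕ)})) : P.Φ x = 0 := by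
  have hker : Submodule.span ℂ (⇑P.b1 '' {i : Fin P.m1 | P.n1 ≤ (i : ℕ)}) ≤
      LinearMap.ker P.Φ := by
    rw [Submodule.span_le]
    rintro _ ⟨i, hi, rfl⟩
    exact LinearMap.mem_ker.mpr (P.Phi_left_tail i hi)
  exact LinearMap.mem_ker.mp (hker hx)

lemma Phi_right_zero (x : g1) {y : g2}
    (hy : y ∈ Submodule.span ℂ (⇑P.b2 '' {j : Fin P.m2 | P.n2 ≤ (j : ℕ)})) :
    P.Φ x y = 0 := by
  have hker : Submodule.span ℂ (⇑P.b2 '' {j : Fin P.m2 | P.n2 ≤ (j : ℕ)}) ≤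
      LinearMap.ker (P.Φ x) := by
    rw [Submodule.span_le]
    rintro _ ⟨j, hj, rfl⟩
    exact LinearMap.mem_ker.mpr (P.Phi_right_tail x j hj)
  exact LinearMap.mem_ker.mp (hker hy)

lemma center_eq
    (hZ1 : (LieAlgebra.center ℂ g1).toSubmodule ≤ (LieAlgebra.derivedSeries ℂ g1 1).toSubmodule)
    (hZ2 : (LieAlgebra.center ℂ g2).toSubmodule ≤
      (LieAlgebra.derivedSeries ℂ g2 1).toSubmodule) :
    (LieAlgebra.center ℂ L).toSubmodule =
      (((LieAlgebra.center ℂ g1).toSubmodule).prod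
        (((LieAlgebra.center ℂ g2).toSubmodule).prod
          (⊤ : Submodule ℂ (Fin P.n1 → Fin P.n2 → ℂ)))).map P.e.toLinearMap := by
  ext z
  rw [LieSubmodule.mem_toSubmodule, LieModule.mem_maxTrivSubmodule]
  constructor
  · intro hz
    refine ⟨P.e.symm z, Submodule.mem_prod.mpr ⟨?_, Submodule.mem_prod.mpr ⟨?_, trivial⟩⟩,
      P.e.apply_symm_apply z⟩
    · rw [LieSubmodule.mem_toSubmodule, LieModule.mem_maxTrivSubmodule]
      intro x'
      have hb := P.bracket_eq (x', 0, 0) (P.e.symm z)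
      rw [P.e.apply_symm_apply, hz (P.e (x', 0, 0))] at hb
      have h0 := congrArg P.e.symm hb
      rw [map_zero, P.e.symm_apply_apply] at h0
      exact (congrArg (fun p : g1 × g2 × (Fin P.n1 → Fin P.n2 → ℂ) => p.1) h0).symm
    · rw [LieSubmodule.mem_toSubmodule, LieModule.mem_maxTrivSubmodule]
      intro y'
      have hb := P.bracket_eq (0, y', 0) (P.e.symm z)
      rw [P.e.apply_symm_apply, hz (P.e (0, y', 0))] at hb
      have h0 := congrArg P.e.symm hb
      rw [map_zero, P.e.symm_apply_apply] at h0
      exact (congrArg (fun p : g1 × g2 × (Fin P.n1 → Fin P.n2 → ℂ) => p.2.1) h0).symm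
  · rintro ⟨⟨x, y, v⟩, hmem, rfl⟩
    have hx := (Submodule.mem_prod.mp hmem).1
    have hy := (Submodule.mem_prod.mp (Submodule.mem_prod.mp hmem).2).1
    have hxc : ∀ x' : g1, ⁅x', x⁆ = 0 := by
      rw [LieSubmodule.mem_toSubmodule, LieModule.mem_maxTrivSubmodule] at hx
      exact hx
    have hyc : ∀ y' : g2, ⁅y', y⁆ = 0 := by
      rw [LieSubmodule.mem_toSubmodule, LieModule.mem_maxTrivSubmodule] at hy
      exact hy
    have hΦx : P.Φ x = 0 := P.Phi_left_zero (P.adapted1 (hZ1 hx))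
    have hΦy : ∀ x' : g1, P.Φ x' y = 0 := fun x' =>
      P.Phi_right_zero x' (P.adapted2 (hZ2 hy))
    intro w
    show ⁅w, P.e (x, y, v)⁆ = 0
    have hb := P.bracket_eq (P.e.symm w) (x, y, v)
    rw [P.e.apply_symm_apply] at hb
    rw [hb]
    have : (⁅(P.e.symm w).1, (x, y, v).1⁆, ⁅(P.e.symm w).2.1, (x, y, v).2.1⁆,
        P.Φ (P.e.symm w).1 (x, y, v).2.1 - P.Φ (x, y, v).1 (P.e.symm w).2.1)
        = ((0 : g1), (0 : g2), (0 : Fin P.n1 → Fin P.n2 → ℂ)) := by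
      rw [hxc, hyc, hΦy, hΦx]
      simp
    rw [this]
    exact map_zero _

lemma e_g1_mem_derived {x : g1}
    (hx : x ∈ (LieAlgebra.derivedSeries ℂ g1 1).toSubmodule) :
    P.e (x, 0, 0) ∈ (LieAlgebra.derivedSeries ℂ L 1).toSubmodule := by
  rw [derived_one_toSubmodule_eq] at hx
  induction hx using Submodule.span_induction with
  | mem m hm =>
    obtain ⟨a, b, rfl⟩ := hm
    have heq : P.e (⁅a, b⁆, 0, 0) = ⁅P.e (a, 0, 0), P.e (b, 0, 0)⁆ := by
      rw [P.bracket_eq]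
      simp
    rw [heq]
    exact lie_mem_derived_one _ _
  | zero =>
    rw [Prod.mk_zero_zero, Prod.mk_zero_zero, map_zero]
    exact Submodule.zero_mem _
  | add a b _ _ ha hb =>
    have heq : ((a, 0, 0) : g1 × g2 × (Fin P.n1 → Fin P.n2 → ℂ)) + (b, 0, 0) =
        (a + b, 0, 0) := by simp
    rw [← heq, map_add]
    exact add_mem ha hb
  | smul c a _ ha =>
    have heq : c • ((a, 0, 0) : g1 × g2 × (Fin P.n1 → Fin P.n2 → ℂ)) = (c • a, 0, 0) := by
      simp
    rw [← heq, map_smul]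
    exact Submodule.smul_mem _ _ ha

lemma e_g2_mem_derived {y : g2}
    (hy : y ∈ (LieAlgebra.derivedSeries ℂ g2 1).toSubmodule) :
    P.e (0, y, 0) ∈ (LieAlgebra.derivedSeries ℂ L 1).toSubmodule := by
  rw [derived_one_toSubmodule_eq] at hy
  induction hy using Submodule.span_induction with
  | mem m hm =>
    obtain ⟨a, b, rfl⟩ := hm
    have heq : P.e (0, ⁅a, b⁆, 0) = ⁅P.e (0, a, 0), P.e (0, b, 0)⁆ := by
      rw [P.bracket_eq]
      simp
    rw [heq]
    exact lie_mem_derived_one _ _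
  | zero =>
    rw [Prod.mk_zero_zero, Prod.mk_zero_zero, map_zero]
    exact Submodule.zero_mem _
  | add a b _ _ ha hb =>
    have heq : ((0, a, 0) : g1 × g2 × (Fin P.n1 → Fin P.n2 → ℂ)) + (0, b, 0) =
        (0, a + b, 0) := by simp
    rw [← heq, map_add]
    exact add_mem ha hb
  | smul c a _ ha =>
    have heq : c • ((0, a, 0) : g1 × g2 × (Fin P.n1 → Fin P.n2 → ℂ)) = (0, c • a, 0) := by
      simp
    rw [← heq, map_smul]
    exact Submodule.smul_mem _ _ ha

/-- the linear inclusion of the third factor -/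
def j3 : (Fin P.n1 → Fin P.n2 → ℂ) →ₗ[ℂ] L :=
  P.e.toLinearMap ∘ₗ LinearMap.inr ℂ g1 (g2 × (Fin P.n1 → Fin P.n2 → ℂ)) ∘ₗ
    LinearMap.inr ℂ g2 (Fin P.n1 → Fin P.n2 → ℂ)

lemma j3_apply (w : Fin P.n1 → Fin P.n2 → ℂ) : P.j3 w = P.e (0, 0, w) := rfl

lemma e_v_mem_derived (v : Fin P.n1 → Fin P.n2 → ℂ) :
    P.e (0, 0, v) ∈ (LieAlgebra.derivedSeries ℂ L 1).toSubmodule := by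
  have hsingle : ∀ (i : Fin P.n1) (j : Fin P.n2),
      P.e (0, 0, Pi.single i (Pi.single j (1 : ℂ))) ∈
        (LieAlgebra.derivedSeries ℂ L 1).toSubmodule := by
    intro i j
    have hij : P.Φ (P.b1 (Fin.castLE P.n1_le i)) (P.b2 (Fin.castLE P.n2_le j)) =
        Pi.single i (Pi.single j (1 : ℂ)) := by
      rw [P.hΦ, dif_pos ⟨i.isLt, j.isLt⟩]
      ext a b
      simp [Pi.single_apply, Fin.ext_iff]
    have heq : P.e (0, 0, Pi.single i (Pi.single j (1 : ℂ))) =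
        ⁅P.e (P.b1 (Fin.castLE P.n1_le i), 0, 0), P.e (0, P.b2 (Fin.castLE P.n2_le j), 0)⁆ := by
      rw [P.bracket_eq]
      simp [hij]
    rw [heq]
    exact lie_mem_derived_one _ _
  have hv2 : v = ∑ i : Fin P.n1, ∑ j : Fin P.n2,
      (v i j) • (Pi.single i (Pi.single j (1 : ℂ)) : Fin P.n1 → Fin P.n2 → ℂ) := by
    ext a b
    simp [Finset.sum_apply, ite_apply, Pi.single_apply, smul_eq_mul, mul_ite, mul_one,
      mul_zero, Finset.sum_ite_eq, Pi.zero_apply]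
  rw [← P.j3_apply, hv2]
  simp only [map_sum, map_smul]
  refine Submodule.sum_mem _ fun i _ => Submodule.sum_mem _ fun j _ =>
    Submodule.smul_mem _ _ ?_
  rw [P.j3_apply]
  exact hsingle i j

include P in
lemma center_le_derived_L
    (hZ1 : (LieAlgebra.center ℂ g1).toSubmodule ≤ (LieAlgebra.derivedSeries ℂ g1 1).toSubmodule)
    (hZ2 : (LieAlgebra.center ℂ g2).toSubmodule ≤
      (LieAlgebra.derivedSeries ℂ g2 1).toSubmodule) :
    (LieAlgebra.center ℂ L).toSubmodule ≤ (LieAlgebra.derivedSeries ℂ L 1).toSubmodule := by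
  rw [P.center_eq hZ1 hZ2]
  rintro _ ⟨⟨x, y, v⟩, hmem, rfl⟩
  have hx := (Submodule.mem_prod.mp hmem).1
  have hy := (Submodule.mem_prod.mp (Submodule.mem_prod.mp hmem).2).1
  have heq : P.e (x, y, v) = P.e (x, 0, 0) + P.e (0, y, 0) + P.e (0, 0, v) := by
    rw [← map_add, ← map_add]
    congr 1
    simp
  show P.e (x, y, v) ∈ _
  rw [heq]
  exact add_mem (add_mem (P.e_g1_mem_derived (hZ1 hx)) (P.e_g2_mem_derived (hZ2 hy)))
    (P.e_v_mem_derived v)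

lemma fdim_L [FiniteDimensional ℂ g1] [FiniteDimensional ℂ g2] :
    fdim L = fdim g1 + (fdim g2 + P.n1 * P.n2) := by
  show finrank ℂ L = finrank ℂ g1 + (finrank ℂ g2 + P.n1 * P.n2)
  rw [P.e.symm.finrank_eq, Module.finrank_prod, Module.finrank_prod]
  congr 2
  simp [Module.finrank_pi_fintype, Module.finrank_pi]

lemma zdim_L [FiniteDimensional ℂ g1] [FiniteDimensional ℂ g2]
    (hZ1 : (LieAlgebra.center ℂ g1).toSubmodule ≤ (LieAlgebra.derivedSeries ℂ g1 1).toSubmodule)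
    (hZ2 : (LieAlgebra.center ℂ g2).toSubmodule ≤
      (LieAlgebra.derivedSeries ℂ g2 1).toSubmodule) :
    zdim L = zdim g1 + (zdim g2 + P.n1 * P.n2) := by
  show finrank ℂ (LieAlgebra.center ℂ L).toSubmodule = _
  rw [P.center_eq hZ1 hZ2, LinearEquiv.finrank_map_eq, finrank_prod_sub, finrank_prod_sub,
    finrank_top]
  congr 2
  simp [Module.finrank_pi_fintype, Module.finrank_pi]

end IsProductByGenerators

def Good (A : Type*) [LieRing A] [LieAlgebra ℂ A] (N k F Z : ℕ) : Prop :=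
  FiniteDimensional ℂ A ∧
  ((LieAlgebra.center ℂ A).toSubmodule ≤ (LieAlgebra.derivedSeries ℂ A 1).toSubmodule) ∧
  2 * fdim A + N * k ^ 2 = N ^ 2 * k ^ 2 + 2 * N * F ∧
  2 * zdim A + N * k ^ 2 = N ^ 2 * k ^ 2 + 2 * N * Z

theorem good_base {A B : Type*} [LieRing A] [LieAlgebra ℂ A] [LieRing B]
    [LieAlgebra ℂ B] [FiniteDimensional ℂ B] (f : A ≃ₗ⁅ℂ⁆ B)
    (hZ : (LieAlgebra.center ℂ B).toSubmodule ≤ (LieAlgebra.derivedSeries ℂ B 1).toSubmodule)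
    (k : ℕ) : Good A 1 k (fdim B) (zdim B) := by
  have hfd : FiniteDimensional ℂ A := Module.Finite.equiv f.symm.toLinearEquiv
  have hcen : (LieAlgebra.center ℂ A).toSubmodule.map
      (f.toLinearEquiv : A →ₗ[ℂ] B) = (LieAlgebra.center ℂ B).toSubmodule := by
    ext w
    simp only [Submodule.mem_map, LieSubmodule.mem_toSubmodule,
      LieModule.mem_maxTrivSubmodule]
    constructor
    · rintro ⟨x, hx, rfl⟩
      intro u
      have h1 : (⁅u, (f.toLinearEquiv : A →ₗ[ℂ] B) x⁆ : B) = f ⁅f.symm u, x⁆ := by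
        rw [LieEquiv.map_lie]
        simp [LieEquiv.apply_symm_apply]
      rw [h1, hx]
      exact f.toLinearEquiv.map_zero
    · intro hw
      refine ⟨f.symm w, fun a => ?_, by simp [LieEquiv.apply_symm_apply]⟩
      have h2 : f ⁅a, f.symm w⁆ = 0 := by
        rw [LieEquiv.map_lie, LieEquiv.apply_symm_apply]
        exact hw (f a)
      have h3 := congrArg f.symm h2
      rw [LieEquiv.symm_apply_apply] at h3
      rw [h3]
      exact f.symm.toLinearEquiv.map_zero
  have hder : (LieAlgebra.derivedSeries ℂ A 1).toSubmodule.map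
      (f.toLinearEquiv : A →ₗ[ℂ] B) = (LieAlgebra.derivedSeries ℂ B 1).toSubmodule := by
    rw [derived_one_toSubmodule_eq, derived_one_toSubmodule_eq, Submodule.map_span]
    congr 1
    ext w
    constructor
    · rintro ⟨_, ⟨a, b, rfl⟩, rfl⟩
      exact ⟨f a, f b, (LieEquiv.map_lie f a b).symm⟩
    · rintro ⟨a, b, rfl⟩
      refine ⟨⁅f.symm a, f.symm b⁆, ⟨_, _, rfl⟩, ?_⟩
      show f ⁅f.symm a, f.symm b⁆ = _
      rw [LieEquiv.map_lie]
      simp [LieEquiv.apply_symm_apply]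
  have hfdim : fdim A = fdim B := f.toLinearEquiv.finrank_eq
  have hzdim : zdim A = zdim B := by
    show finrank ℂ (LieAlgebra.center ℂ A).toSubmodule =
      finrank ℂ (LieAlgebra.center ℂ B).toSubmodule
    rw [← hcen, LinearEquiv.finrank_map_eq]
  refine ⟨hfd, ?_, by rw [hfdim]; ring, by rw [hzdim]; ring⟩
  intro x hx
  have h1 : (f.toLinearEquiv : A →ₗ[ℂ] B) x ∈ (LieAlgebra.center ℂ B).toSubmodule := by
    rw [← hcen]
    exact Submodule.mem_map_of_mem hx
  have h2 := hZ h1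
  rw [← hder] at h2
  obtain ⟨x', hx', heq⟩ := h2
  have : x' = x := f.toLinearEquiv.injective heq
  rwa [← this]

theorem good_step {g1 g2 L : Type*} [LieRing g1] [LieAlgebra ℂ g1] [LieRing g2]
    [LieAlgebra ℂ g2] [LieRing L] [LieAlgebra ℂ L] [FiniteDimensional ℂ g2]
    (hZ2 : (LieAlgebra.center ℂ g2).toSubmodule ≤ (LieAlgebra.derivedSeries ℂ g2 1).toSubmodule)
    (P : IsProductByGenerators L g1 g2) (N k F Z : ℕ)
    (hn1 : P.n1 = N * k) (hn2 : P.n2 = k) (hF : fdim g2 = F) (hZd : zdim g2 = Z)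
    (hG : Good g1 N k F Z) : Good L (N + 1) k F Z := by
  obtain ⟨hfd1, hZle1, he1, he2⟩ := hG
  haveI := hfd1
  refine ⟨Module.Finite.equiv P.e, P.center_le_derived_L hZle1 hZ2, ?_, ?_⟩
  · have hf := P.fdim_L
    rw [hn1, hn2, hF] at hf
    rw [hf]
    zify at he1 ⊢
    linear_combination he1
  · have hf := P.zdim_L hZle1 hZ2
    rw [hn1, hn2, hZd] at hf
    rw [hf]
    zify at he2 ⊢
    linear_combination he2

end AuxProofs


/-- for a characteristically nilpotent S-algebra `g` with `k` generators,
the `n`-th power `×̲ⁿ g` (realized by the chain `h` with `h 1 ≅ g`,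
`h (n+1) = h n ×̲ g`) satisfies
`dim(×̲ⁿg) = ½n²k² + (dim g − ½k²)n` and
`dim Z(×̲ⁿg) = ½n²k² + (dim Z(g) − ½k²)n`
(stated multiplied by 2 to avoid fractions). -/
theorem statement_17 (g : Type) [LieRing g] [LieAlgebra ℂ g]
    [FiniteDimensional ℂ g] [LieRing.IsNilpotent g]
    (hcn : CharacteristicallyNilpotent g) (hS : IsSAlgebra g)
    (k : ℕ) (hk : gdim g = k)
    (h : ℕ → Type) (iR : ∀ n, LieRing (h n)) (iA : ∀ n, @LieAlgebra ℂ (h n) _ (iR n))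
    (hbase : @LieIso (h 1) g (iR 1) (iA 1) _ _)
    (P : ∀ n : ℕ, @IsProductByGenerators (h (n + 2)) (h (n + 1)) g
      (iR (n + 2)) (iA (n + 2)) (iR (n + 1)) (iA (n + 1)) _ _)
    -- at each step the two factors have `(n+1)k` and `k` generators respectively
    (hP1 : ∀ n, (P n).n1 = (n + 1) * k) (hP2 : ∀ n, (P n).n2 = k) :
    ∀ n : ℕ, 1 ≤ n →
      2 * @fdim (h n) (iR n) (iA n) + n * k ^ 2 = n ^ 2 * k ^ 2 + 2 * n * fdim g ∧
      2 * @zdim (h n) (iR n) (iA n) + n * k ^ 2 = n ^ 2 * k ^ 2 + 2 * n * zdim g := by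
  have hZg : (LieAlgebra.center ℂ g).toSubmodule ≤
      (LieAlgebra.derivedSeries ℂ g 1).toSubmodule := center_le_derived_of_cn g hcn
  have main : ∀ n : ℕ,
      @Good (h (n + 1)) (iR (n + 1)) (iA (n + 1)) (n + 1) k (fdim g) (zdim g) := by
    intro n
    induction n with
    | zero =>
      letI := iR 1; letI := iA 1
      exact good_base hbase.some hZg k
    | succ m ih =>
      letI := iR (m + 1); letI := iA (m + 1)
      letI := iR (m + 2); letI := iA (m + 2)
      exact good_step hZg (P m) (m + 1) k (fdim g) (zdim g) (hP1 m) (hP2 m) rfl rfl ih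
  intro n hn
  cases n with
  | zero => omega
  | succ m =>
    obtain ⟨-, -, H1, H2⟩ := main m
    exact ⟨H1, H2⟩
end
end
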